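/- Let G be a Δ-regular bipartite graph with parts of size n in the class G^bip_{Δ,λ}, H a symmetric q×q δ-matrix, and ε ∈ (0, 1/(240 q log q)] with ε² ≥ 8q²log(q)/(Δ log(1/δ)) and ε ≥ 2qλ/Δ. Then for sufficiently large n, the overlap partition function satisfies Z^{overlap}_{G,H,3ε} ≤ e^{−n/(3q)}·Z_{G,H,ε}. -/

import Mathlib

open Finset
open scoped Classical

def IsDeltaMatrix {q : ℕ} (δ : ℝ) (H : Matrix (Fin q) (Fin q) ℝ) : Prop :=
  (∀ i j, 0 ≤ H i j) ∧ (∃ i j, H i j = 1) ∧ (∀ i j, H i j = 1 ∨ H i j ≤ δ)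

def IsBiclique {q : ℕ} (H : Matrix (Fin q) (Fin q) ℝ) (B0 B1 : Finset (Fin q)) : Prop :=
  ∀ i ∈ B0, ∀ j ∈ B1, H i j = 1

def IsMaxBiclique {q : ℕ} (H : Matrix (Fin q) (Fin q) ℝ) (B0 B1 : Finset (Fin q)) : Prop :=
  IsBiclique H B0 B1 ∧
    ∀ C0 C1, IsBiclique H C0 C1 → B0 ⊆ C0 → B1 ⊆ C1 → C0 = B0 ∧ C1 = B1

/-- Weight of a spin configuration on a bipartite graph (each edge counted once). -/
def bipWeight {n q : ℕ} (G : SimpleGraph (Fin n ⊕ Fin n)) [DecidableRel G.Adj]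
    (H : Matrix (Fin q) (Fin q) ℝ) (σ : Fin n ⊕ Fin n → Fin q) : ℝ :=
  ∏ u : Fin n, ∏ v : Fin n,
    if G.Adj (Sum.inl u) (Sum.inr v) then H (σ (Sum.inl u)) (σ (Sum.inr v)) else 1

/-- `σ` is within `ε` of the maximal biclique `(B₀,B₁)`. -/
def NearBiclique {n q : ℕ} (ε : ℝ) (B0 B1 : Finset (Fin q))
    (σ : Fin n ⊕ Fin n → Fin q) : Prop :=
  (1 - ε) * (2 * n) ≤
    ((Finset.univ.filter (fun u : Fin n => σ (Sum.inl u) ∈ B0)).card : ℝ) +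
      ((Finset.univ.filter (fun u : Fin n => σ (Sum.inr u) ∈ B1)).card : ℝ)


set_option maxHeartbeats 1000000

/-- monotonicity of `u ↦ u * (1 - log u)` on `(0,1]`. -/
lemma mono_ulog {u v : ℝ} (hu : 0 < u) (huv : u ≤ v) (hv1 : v ≤ 1) :
    u * (1 - Real.log u) ≤ v * (1 - Real.log v) := by
  have hv : 0 < v := lt_of_lt_of_le hu huv
  have h1 : Real.log (v / u) ≤ v / u - 1 := Real.log_le_sub_one_of_pos (by positivity)
  rw [Real.log_div (ne_of_gt hv) (ne_of_gt hu)] at h1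
  have h2 : u * (Real.log v - Real.log u) ≤ u * (v / u - 1) :=
    mul_le_mul_of_nonneg_left h1 hu.le
  have h3 : u * (v / u - 1) = v - u := by field_simp
  have hlogv : Real.log v ≤ 0 := Real.log_nonpos hv.le hv1
  nlinarith [mul_nonneg (sub_nonneg.2 huv) (neg_nonneg.2 hlogv)]

/-- `k^k ≤ k! * e^k`. -/
lemma kpow_le_factorial_mul_exp : ∀ k : ℕ, (k : ℝ) ^ k ≤ (k.factorial : ℝ) * Real.exp k := by
  intro k
  induction k with
  | zero => simp
  | succ k ih =>
    have hstep : ((k : ℝ) + 1) ^ k ≤ (k : ℝ) ^ k * Real.exp 1 := by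
      rcases Nat.eq_zero_or_pos k with hk | hk
      · subst hk; simpa using Real.one_le_exp (by norm_num)
      · have hk0 : (0:ℝ) < k := by exact_mod_cast hk
        have h1 : (k : ℝ) + 1 = (k:ℝ) * (1 + 1/(k:ℝ)) := by field_simp
        have h2 : (1 + 1/(k:ℝ)) ≤ Real.exp (1/(k:ℝ)) := by
          have := Real.add_one_le_exp (1/(k:ℝ)); linarith
        have h3 : (1 + 1/(k:ℝ))^k ≤ (Real.exp (1/(k:ℝ)))^k :=
          pow_le_pow_left₀ (by positivity) h2 k
        have h4 : (Real.exp (1/(k:ℝ)))^k = Real.exp 1 := by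
          rw [← Real.exp_nat_mul]
          congr 1
          field_simp
        rw [h1, mul_pow]
        rw [h4] at h3
        exact mul_le_mul_of_nonneg_left h3 (by positivity)
    have hkpos : (0:ℝ) ≤ (k:ℝ) + 1 := by positivity
    calc ((k+1 : ℕ) : ℝ) ^ (k+1) = ((k:ℝ)+1) * ((k:ℝ)+1)^k := by push_cast; ring
    _ ≤ ((k:ℝ)+1) * ((k:ℝ)^k * Real.exp 1) := by
        exact mul_le_mul_of_nonneg_left hstep hkpos
    _ ≤ ((k:ℝ)+1) * ((k.factorial : ℝ) * Real.exp k * Real.exp 1) := by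
        refine mul_le_mul_of_nonneg_left ?_ hkpos
        exact mul_le_mul_of_nonneg_right ih (Real.exp_pos 1).le
    _ = ((k+1).factorial : ℝ) * Real.exp ((k+1:ℕ)) := by
        push_cast [Nat.factorial_succ, Real.exp_add]; ring

lemma choose_le_exp {n k : ℕ} {c : ℝ} (hn : 1 ≤ n) (hc0 : 0 < c) (hc1 : c ≤ 1)
    (hk : (k : ℝ) ≤ c * n) : (n.choose k : ℝ) ≤ Real.exp (n * (c * (1 - Real.log c))) := by
  have hn0 : (0:ℝ) < n := by exact_mod_cast hn
  have hc' : 0 ≤ c * (1 - Real.log c) := by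
    have : Real.log c ≤ 0 := Real.log_nonpos hc0.le hc1
    nlinarith
  rcases Nat.eq_zero_or_pos k with hk0 | hk1
  · subst hk0
    simp only [Nat.choose_zero_right, Nat.cast_one]
    exact Real.one_le_exp (mul_nonneg hn0.le hc')
  · have hk0 : (0:ℝ) < k := by exact_mod_cast hk1
    have h1 : (n.choose k : ℝ) ≤ (n:ℝ)^k / (k.factorial : ℝ) := by
      have := Nat.choose_le_pow_div (α := ℝ) k n
      simpa using this
    have hfac : (0:ℝ) < (k.factorial : ℝ) := by exact_mod_cast k.factorial_pos
    have h2 : (n:ℝ)^k / (k.factorial : ℝ) ≤ (n:ℝ)^k * Real.exp k / (k:ℝ)^k := by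
      rw [div_le_div_iff₀ hfac (by positivity)]
      have := kpow_le_factorial_mul_exp k
      nlinarith [pow_pos hn0 k, Real.exp_pos (k:ℝ)]
    have h3 : (n:ℝ)^k * Real.exp k / (k:ℝ)^k
        = Real.exp ((k:ℝ) * (1 + Real.log n - Real.log k)) := by
      rw [show (k:ℝ) * (1 + Real.log n - Real.log k)
          = (k:ℝ) * Real.log n + (k:ℝ) - (k:ℝ) * Real.log k by ring]
      rw [Real.exp_sub, Real.exp_add]
      rw [show (k:ℝ) * Real.log n = Real.log ((n:ℝ)^k) by rw [Real.log_pow]]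
      rw [show (k:ℝ) * Real.log k = Real.log ((k:ℝ)^k) by rw [Real.log_pow]]
      rw [Real.exp_log (by positivity), Real.exp_log (by positivity)]
    have h4 : (k:ℝ) * (1 + Real.log n - Real.log k) ≤ (n:ℝ) * (c * (1 - Real.log c)) := by
      have hu0 : 0 < (k:ℝ)/(n:ℝ) := by positivity
      have huv : (k:ℝ)/(n:ℝ) ≤ c := by rw [div_le_iff₀ hn0]; linarith
      have := mono_ulog hu0 huv hc1
      have hmul := mul_le_mul_of_nonneg_left this hn0.le
      have heq : (n:ℝ) * ((k:ℝ)/(n:ℝ) * (1 - Real.log ((k:ℝ)/(n:ℝ))))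
          = (k:ℝ) * (1 + Real.log n - Real.log k) := by
        rw [Real.log_div (ne_of_gt hk0) (ne_of_gt hn0),
          show (n:ℝ) * ((k:ℝ)/(n:ℝ) * (1 - (Real.log k - Real.log n)))
            = ((n:ℝ) * ((k:ℝ)/(n:ℝ))) * (1 - (Real.log k - Real.log n)) by ring,
          mul_div_cancel₀ _ (ne_of_gt hn0)]
        ring
      rw [heq] at hmul
      linarith
    calc (n.choose k : ℝ) ≤ (n:ℝ)^k / (k.factorial : ℝ) := h1
    _ ≤ (n:ℝ)^k * Real.exp k / (k:ℝ)^k := h2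
    _ = Real.exp ((k:ℝ) * (1 + Real.log n - Real.log k)) := h3
    _ ≤ Real.exp ((n:ℝ) * (c * (1 - Real.log c))) := Real.exp_le_exp.2 h4

lemma mono_ulog' {u v : ℝ} (hu : 0 < u) (huv : u ≤ v) (hv1 : v ≤ 1) :
    u * (1 - Real.log u) ≤ v * (1 - Real.log v) := by
  have hv : 0 < v := lt_of_lt_of_le hu huv
  have h1 : Real.log (v / u) ≤ v / u - 1 := Real.log_le_sub_one_of_pos (by positivity)
  rw [Real.log_div (ne_of_gt hv) (ne_of_gt hu)] at h1
  have h2 : u * (Real.log v - Real.log u) ≤ u * (v / u - 1) :=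
    mul_le_mul_of_nonneg_left h1 hu.le
  have h3 : u * (v / u - 1) = v - u := by field_simp
  have hlogv : Real.log v ≤ 0 := Real.log_nonpos hv.le hv1
  nlinarith [mul_nonneg (sub_nonneg.2 huv) (neg_nonneg.2 hlogv)]

lemma log20_lt_3 : Real.log 20 < 3 := by
  have h20 : (20:ℝ) < Real.exp 3 := by
    have h := Real.exp_one_gt_d9
    have h3 : Real.exp 3 = Real.exp 1 * Real.exp 1 * Real.exp 1 := by
      rw [← Real.exp_add, ← Real.exp_add]; norm_num
    nlinarith [Real.exp_pos 1]
  calc Real.log 20 < Real.log (Real.exp 3) := Real.log_lt_log (by norm_num) h20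
  _ = 3 := Real.log_exp 3

lemma key_analytic {q : ℕ} (hq : 2 ≤ q) {ε : ℝ} (hε0 : 0 < ε)
    (hεup : ε ≤ 1 / (240 * q * Real.log q)) :
    24*ε*(1 - Real.log (12*ε)) + 24*ε*Real.log q + 12*ε*Real.log 2 + 1/(3*q)
      < -Real.log (1 - 1/q) := by
  have hQ2 : (2:ℝ) ≤ (q:ℝ) := by exact_mod_cast hq
  have hQ0 : (0:ℝ) < (q:ℝ) := by linarith
  have hl2 : (0.6931471803:ℝ) < Real.log 2 := Real.log_two_gt_d9
  have hl2u : Real.log 2 < 0.6931471808 := Real.log_two_lt_d9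
  have ht2 : Real.log 2 ≤ Real.log q := Real.log_le_log (by norm_num) (by exact_mod_cast hQ2)
  set t := Real.log (q:ℝ) with hT
  have ht0 : 0 < t := by linarith
  set ε₀ : ℝ := 1/(240*(q:ℝ)*t) with hE
  have hε₀pos : 0 < ε₀ := by positivity
  have hεε₀ : ε ≤ ε₀ := hεup
  have h12 : 12*ε₀ = 1/(20*(q:ℝ)*t) := by rw [hE]; field_simp; ring
  have h12le1 : 12*ε₀ ≤ 1 := by
    rw [h12, div_le_one (by positivity)]
    nlinarith
  have hmono := mono_ulog' (u := 12*ε) (v := 12*ε₀) (by positivity) (by linarith) h12le1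
  have hlog12 : Real.log (12*ε₀) = -(Real.log 20 + t + Real.log t) := by
    rw [h12, one_div, Real.log_inv, Real.log_mul (by positivity) (ne_of_gt ht0),
      Real.log_mul (by norm_num) (ne_of_gt hQ0)]
  have hx : (0:ℝ) < 1 - 1/(q:ℝ) := by
    have : 1/(q:ℝ) ≤ 1/2 := by
      rw [div_le_div_iff₀ hQ0 (by norm_num)]; linarith
    linarith
  have hL : 1/(q:ℝ) ≤ -Real.log (1 - 1/(q:ℝ)) := by
    have := Real.log_le_sub_one_of_pos hx; linarith
  have hlogt : Real.log t ≤ t - 1 := by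
    have := Real.log_le_sub_one_of_pos ht0; linarith
  have hlog20 := log20_lt_3
  have hlog20' : (0:ℝ) < Real.log 20 := Real.log_pos (by norm_num)
  -- master bound
  have e1 : 12*ε₀*(1 - Real.log (12*ε₀))
      = (1/(20*(q:ℝ)*t)) * (1 + Real.log 20 + t + Real.log t) := by
    rw [hlog12, h12]; ring
  have hεt : 24*ε*t ≤ 24*ε₀*t := by nlinarith
  have hεl2 : 12*ε*Real.log 2 ≤ 12*ε₀*Real.log 2 := by nlinarith
  have hmaster : 24*ε*(1 - Real.log (12*ε)) + 24*ε*t + 12*ε*Real.log 2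
      ≤ (1/(10*(q:ℝ)*t)) * (1 + Real.log 20 + 2*t + Real.log t + Real.log 2/2) := by
    have e3 : (1/(10*(q:ℝ)*t)) * (1 + Real.log 20 + 2*t + Real.log t + Real.log 2/2)
        = 2*((1/(20*(q:ℝ)*t)) * (1 + Real.log 20 + t + Real.log t))
          + 24*ε₀*t + 12*ε₀*Real.log 2 := by
      rw [hE]; field_simp; ring
    rw [e3, ← e1]
    linarith
  have hq23 : (q:ℝ) = 2 ∨ (3:ℝ) ≤ (q:ℝ) := by
    rcases Nat.lt_or_ge q 3 with h | h
    · left; have : q = 2 := by omega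
      rw [this]; norm_num
    · right; exact_mod_cast h
  have hfinal : (1/(10*(q:ℝ)*t)) * (1 + Real.log 20 + 2*t + Real.log t + Real.log 2/2)
      + 1/(3*(q:ℝ)) < -Real.log (1 - 1/(q:ℝ)) := by
    rcases hq23 with hq2 | hq3
    · -- q = 2
      have ht' : t = Real.log 2 := by rw [hT, hq2]
      have hLeq : -Real.log (1 - 1/(q:ℝ)) = Real.log 2 := by
        rw [hq2, show (1:ℝ) - 1/2 = 2⁻¹ by norm_num, Real.log_inv]; ring
      rw [hLeq, hq2, ht']
      have h1 : Real.log (Real.log 2) ≤ Real.log 2 - 1 := by rw [← ht']; exact hlogt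
      set l := Real.log 2 with hl
      have h20l : (0:ℝ) < 20 * l := by linarith
      have key : 1 + Real.log 20 + 2*l + Real.log l + l/2 < (l - 1/(3*2)) * (20 * l) := by
        nlinarith [hl2, hl2u, hlog20, h1]
      have heq : (1/(10*(2:ℝ)*l)) * (1 + Real.log 20 + 2*l + Real.log l + l/2)
          = (1 + Real.log 20 + 2*l + Real.log l + l/2) / (20 * l) := by
        rw [div_mul_eq_mul_div, one_mul]
        congr 1
        ring
      rw [heq]
      have := (div_lt_iff₀ h20l).2 key
      linarith
    · -- q ≥ 3
      have ht1 : 1 < t := by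
        rw [hT]
        have : Real.exp 1 < 3 := by
          nlinarith [Real.exp_one_lt_d9]
        calc (1:ℝ) = Real.log (Real.exp 1) := by rw [Real.log_exp]
        _ < Real.log 3 := Real.log_lt_log (Real.exp_pos 1) this
        _ ≤ Real.log q := Real.log_le_log (by norm_num) (by exact_mod_cast hq3)
      have hX : 3 * (1 + Real.log 20 + 2*t + Real.log t + Real.log 2/2) < 20 * t := by
        nlinarith
      have step : (1/(10*(q:ℝ)*t)) * (1 + Real.log 20 + 2*t + Real.log t + Real.log 2/2)
          < 2/(3*(q:ℝ)) := by
        rw [div_mul_eq_mul_div, one_mul, div_lt_div_iff₀ (by positivity) (by positivity)]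
        nlinarith [mul_lt_mul_of_pos_left hX hQ0]
      have : 2/(3*(q:ℝ)) + 1/(3*(q:ℝ)) = 1/(q:ℝ) := by
        rw [← add_div]
        rw [show (2:ℝ)+1 = 3 by norm_num]
        rw [div_eq_div_iff (by positivity) (by positivity)]
        ring
      linarith
  linarith [hmaster, hfinal]

lemma count_bad (n q k : ℕ) (hk : k ≤ n) (D0 D1 : Finset (Fin q)) :
    ((univ : Finset ((Fin n ⊕ Fin n) → Fin q)).filter (fun σ =>
      (univ.filter (fun u : Fin n => σ (Sum.inl u) ∉ D0)).card ≤ k ∧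
      (univ.filter (fun u : Fin n => σ (Sum.inr u) ∉ D1)).card ≤ k)).card
    ≤ n.choose k * n.choose k * (q^k * q^k * (D0.card^(n-k) * D1.card^(n-k))) := by
  classical
  set P := Finset.powersetCard k (univ : Finset (Fin n)) with hP
  set F : Finset (Fin n) × Finset (Fin n) → Finset ((Fin n ⊕ Fin n) → Fin q) :=
    fun T => Fintype.piFinset (fun x => Sum.elim
      (fun u => if u ∈ T.1 then (univ : Finset (Fin q)) else D0)
      (fun u => if u ∈ T.2 then (univ : Finset (Fin q)) else D1) x) with hF
  have hsubset : ((univ : Finset ((Fin n ⊕ Fin n) → Fin q)).filter (fun σ =>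
      (univ.filter (fun u : Fin n => σ (Sum.inl u) ∉ D0)).card ≤ k ∧
      (univ.filter (fun u : Fin n => σ (Sum.inr u) ∉ D1)).card ≤ k))
      ⊆ (P ×ˢ P).biUnion F := by
    intro σ hσ
    rw [mem_filter] at hσ
    obtain ⟨-, h0, h1⟩ := hσ
    obtain ⟨T0, hsub0, -, hcard0⟩ :=
      Finset.exists_subsuperset_card_eq (Finset.subset_univ _) h0 (by simpa using hk)
    obtain ⟨T1, hsub1, -, hcard1⟩ :=
      Finset.exists_subsuperset_card_eq (Finset.subset_univ _) h1 (by simpa using hk)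
    rw [Finset.mem_biUnion]
    refine ⟨(T0, T1), Finset.mem_product.2
      ⟨Finset.mem_powersetCard.2 ⟨Finset.subset_univ _, hcard0⟩,
       Finset.mem_powersetCard.2 ⟨Finset.subset_univ _, hcard1⟩⟩, ?_⟩
    rw [hF, Fintype.mem_piFinset]
    rintro (u | u)
    · simp only [Sum.elim_inl]
      by_cases hu : u ∈ T0
      · simp [hu]
      · simp only [hu, if_neg, ite_false]
        by_contra hmem
        exact hu (hsub0 (Finset.mem_filter.2 ⟨Finset.mem_univ u, hmem⟩))
    · simp only [Sum.elim_inr]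
      by_cases hu : u ∈ T1
      · simp [hu]
      · simp only [hu, if_neg, ite_false]
        by_contra hmem
        exact hu (hsub1 (Finset.mem_filter.2 ⟨Finset.mem_univ u, hmem⟩))
  have hFcard : ∀ T ∈ P ×ˢ P, (F T).card ≤ q^k * q^k * (D0.card^(n-k) * D1.card^(n-k)) := by
    rintro ⟨T0, T1⟩ hT
    rw [Finset.mem_product, hP, Finset.mem_powersetCard, Finset.mem_powersetCard] at hT
    obtain ⟨⟨-, hT0⟩, ⟨-, hT1⟩⟩ := hT
    rw [hF]
    rw [Fintype.card_piFinset]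
    rw [Fintype.prod_sum_type]
    have hside : ∀ (T : Finset (Fin n)) (D : Finset (Fin q)), T.card = k →
        (∏ u : Fin n, (if u ∈ T then (univ : Finset (Fin q)) else D).card)
          = q^k * D.card^(n-k) := by
      intro T D hT
      rw [show (∏ u : Fin n, (if u ∈ T then (univ : Finset (Fin q)) else D).card)
          = ∏ u : Fin n, (if u ∈ T then (univ : Finset (Fin q)).card else D.card) by
        apply Finset.prod_congr rfl; intro u _; split <;> rfl]
      rw [Finset.prod_ite]
      rw [Finset.prod_const, Finset.prod_const]
      have h1 : (univ.filter (fun u : Fin n => u ∈ T)).card = k := by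
        rw [Finset.filter_mem_eq_inter, Finset.univ_inter]; exact hT
      have h2 : (univ.filter (fun u : Fin n => ¬ u ∈ T)).card = n - k := by
        have := Finset.card_filter_add_card_filter_not
          (s := (univ : Finset (Fin n))) (fun u => u ∈ T)
        simp only [Finset.card_univ, Fintype.card_fin] at this
        omega
      rw [h1, h2, Finset.card_univ, Fintype.card_fin]
    simp only [Sum.elim_inl, Sum.elim_inr]
    rw [hside T0 D0 hT0, hside T1 D1 hT1]
    ring_nf
    exact le_refl _
  calc ((univ : Finset ((Fin n ⊕ Fin n) → Fin q)).filter _).card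
      ≤ ((P ×ˢ P).biUnion F).card := Finset.card_le_card hsubset
  _ ≤ ∑ T ∈ P ×ˢ P, (F T).card := Finset.card_biUnion_le
  _ ≤ (P ×ˢ P).card * (q^k * q^k * (D0.card^(n-k) * D1.card^(n-k))) := by
      simpa using Finset.sum_le_card_nsmul _ _ _ hFcard
  _ = n.choose k * n.choose k * (q^k * q^k * (D0.card^(n-k) * D1.card^(n-k))) := by
      rw [Finset.card_product, hP, Finset.card_powersetCard, Finset.card_univ,
        Fintype.card_fin]

section newaux
variable {n q : ℕ}

lemma bipWeight_nonneg (G : SimpleGraph (Fin n ⊕ Fin n)) [DecidableRel G.Adj]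
    {δ : ℝ} (H : Matrix (Fin q) (Fin q) ℝ) (hH : IsDeltaMatrix δ H)
    (σ : Fin n ⊕ Fin n → Fin q) : 0 ≤ bipWeight G H σ := by
  unfold bipWeight
  apply Finset.prod_nonneg
  intro u _
  apply Finset.prod_nonneg
  intro v _
  split
  · exact hH.1 _ _
  · norm_num

lemma bipWeight_le_one (G : SimpleGraph (Fin n ⊕ Fin n)) [DecidableRel G.Adj]
    {δ : ℝ} (hδ1 : δ ≤ 1) (H : Matrix (Fin q) (Fin q) ℝ) (hH : IsDeltaMatrix δ H)
    (σ : Fin n ⊕ Fin n → Fin q) : bipWeight G H σ ≤ 1 := by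
  unfold bipWeight
  apply Finset.prod_le_one
  · intro u _
    apply Finset.prod_nonneg
    intro v _
    split
    · exact hH.1 _ _
    · norm_num
  · intro u _
    apply Finset.prod_le_one
    · intro v _
      split
      · exact hH.1 _ _
      · norm_num
    · intro v _
      split
      · rcases hH.2.2 (σ (Sum.inl u)) (σ (Sum.inr v)) with h | h
        · exact le_of_eq h
        · linarith
      · exact le_refl 1

lemma Z_lower (G : SimpleGraph (Fin n ⊕ Fin n)) [DecidableRel G.Adj]
    {δ ε : ℝ} (hε0 : 0 < ε) (H : Matrix (Fin q) (Fin q) ℝ) (hH : IsDeltaMatrix δ H)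
    (B0 B1 : Finset (Fin q)) (hmax : IsMaxBiclique H B0 B1) :
    (B0.card : ℝ)^n * (B1.card : ℝ)^n ≤
      ∑ σ : Fin n ⊕ Fin n → Fin q,
        if ∃ B0 B1, IsMaxBiclique H B0 B1 ∧ NearBiclique ε B0 B1 σ
        then bipWeight G H σ else 0 := by
  classical
  set Spi : Finset ((Fin n ⊕ Fin n) → Fin q) :=
    Fintype.piFinset (fun x => Sum.elim (fun _ => B0) (fun _ => B1) x) with hSpi
  have hcard : ((Spi.card : ℝ)) = (B0.card : ℝ)^n * (B1.card : ℝ)^n := by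
    rw [hSpi, Fintype.card_piFinset]
    rw [Fintype.prod_sum_type]
    push_cast
    simp
  calc (B0.card : ℝ)^n * (B1.card : ℝ)^n
      = ∑ σ : (Fin n ⊕ Fin n) → Fin q, (if σ ∈ Spi then (1:ℝ) else 0) := by
        rw [Finset.sum_ite_mem, Finset.univ_inter, Finset.sum_const, nsmul_eq_mul,
          mul_one, hcard]
  _ ≤ _ := by
      apply Finset.sum_le_sum
      intro σ _
      by_cases hσ : σ ∈ Spi
      · rw [if_pos hσ]
        rw [Fintype.mem_piFinset] at hσ
        have hmem0 : ∀ u : Fin n, σ (Sum.inl u) ∈ B0 := fun u => hσ (Sum.inl u)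
        have hmem1 : ∀ u : Fin n, σ (Sum.inr u) ∈ B1 := fun u => hσ (Sum.inr u)
        have hnear : NearBiclique ε B0 B1 σ := by
          unfold NearBiclique
          have h0 : (Finset.univ.filter (fun u : Fin n => σ (Sum.inl u) ∈ B0)) = univ :=
            Finset.filter_true_of_mem (fun u _ => hmem0 u)
          have h1 : (Finset.univ.filter (fun u : Fin n => σ (Sum.inr u) ∈ B1)) = univ :=
            Finset.filter_true_of_mem (fun u _ => hmem1 u)
          rw [h0, h1, Finset.card_univ, Fintype.card_fin]
          have hn0 : (0:ℝ) ≤ (n:ℝ) := Nat.cast_nonneg n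
          nlinarith
        rw [if_pos ⟨B0, B1, hmax, hnear⟩]
        have : bipWeight G H σ = 1 := by
          unfold bipWeight
          apply Finset.prod_eq_one
          intro u _
          apply Finset.prod_eq_one
          intro v _
          split
          · exact hmax.1 _ (hmem0 u) _ (hmem1 v)
          · rfl
        rw [this]
      · rw [if_neg hσ]
        split
        · exact bipWeight_nonneg G H hH σ
        · exact le_refl 0

end newaux

lemma pow_chain {q n k : ℕ} (hq : 2 ≤ q) (hkn : k ≤ n) {d0 d1 b0 b1 : ℝ}
    (hd0 : 1 ≤ d0) (hd1 : 1 ≤ d1) (hdb0 : d0 ≤ b0 - 1) (hd1b : d1 ≤ b1) (hb0q : b0 ≤ q) :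
    d0^(n-k) * d1^(n-k) ≤ 2^k * (1-1/(q:ℝ))^n * (b0^n * b1^n) := by
  have hQ : (2:ℝ) ≤ (q:ℝ) := by exact_mod_cast hq
  have hq0 : (0:ℝ) < q := by linarith
  set r := 1 - 1/(q:ℝ) with hr
  have hiq : 1/(q:ℝ) ≤ 1/2 := by
    rw [div_le_div_iff₀ hq0 (by norm_num)]; linarith
  have hiq0 : 0 < 1/(q:ℝ) := by positivity
  have hr0 : 0 < r := by rw [hr]; linarith
  have hr2 : 1 ≤ 2*r := by rw [hr]; linarith
  have hb0 : 2 ≤ b0 := by linarith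
  have hb1 : 1 ≤ b1 := le_trans hd1 hd1b
  have h1 : d0 ≤ r * b0 := by
    have hb0q' : b0 * (1/(q:ℝ)) ≤ (q:ℝ) * (1/(q:ℝ)) :=
      mul_le_mul_of_nonneg_right hb0q hiq0.le
    have : (q:ℝ) * (1/(q:ℝ)) = 1 := by field_simp
    rw [hr]; nlinarith
  set m := n - k with hm
  have hA : d0^m ≤ r^m * b0^n := by
    calc d0^m ≤ (r*b0)^m := pow_le_pow_left₀ (by linarith) h1 m
    _ = r^m * b0^m := mul_pow r b0 m
    _ ≤ r^m * b0^n := by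
        apply mul_le_mul_of_nonneg_left _ (pow_nonneg hr0.le m)
        exact pow_le_pow_right₀ (by linarith) (Nat.sub_le n k)
  have hB : d1^m ≤ b1^n := by
    calc d1^m ≤ b1^m := pow_le_pow_left₀ (by linarith) hd1b m
    _ ≤ b1^n := pow_le_pow_right₀ hb1 (Nat.sub_le n k)
  have hrm : r^m ≤ 2^k * r^n := by
    have hsplit : r^n = r^m * r^k := by
      rw [← pow_add]; congr 1; omega
    have h2k : 1 ≤ 2^k * r^k := by
      rw [← mul_pow]
      have := pow_le_pow_left₀ (by norm_num : (0:ℝ) ≤ 1) hr2 k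
      simpa using this
    calc r^m = r^m * 1 := by ring
    _ ≤ r^m * (2^k * r^k) := mul_le_mul_of_nonneg_left h2k (pow_nonneg hr0.le m)
    _ = 2^k * r^n := by rw [hsplit]; ring
  calc d0^m * d1^m ≤ (r^m * b0^n) * b1^n :=
      mul_le_mul hA hB (pow_nonneg (by linarith) m) (by positivity)
  _ = r^m * (b0^n * b1^n) := by ring
  _ ≤ 2^k * r^n * (b0^n * b1^n) :=
      mul_le_mul_of_nonneg_right hrm (by positivity)

lemma near_bad {n q : ℕ} {ε : ℝ} {B0 B1 C0 C1 : Finset (Fin q)}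
    {σ : (Fin n ⊕ Fin n) → Fin q}
    (h1 : NearBiclique (3*ε) B0 B1 σ) (h2 : NearBiclique (3*ε) C0 C1 σ) :
    (((univ : Finset (Fin n)).filter (fun u => σ (Sum.inl u) ∉ B0 ∩ C0)).card : ℝ) ≤ 12*ε*n ∧
    (((univ : Finset (Fin n)).filter (fun u => σ (Sum.inr u) ∉ B1 ∩ C1)).card : ℝ) ≤ 12*ε*n := by
  classical
  unfold NearBiclique at h1 h2
  have key : ∀ (τ : Fin n → Fin q) (X Y : Finset (Fin q)),
      ((n:ℝ) - 6*ε*n ≤ ((univ.filter (fun u : Fin n => τ u ∈ X)).card : ℝ)) →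
      ((n:ℝ) - 6*ε*n ≤ ((univ.filter (fun u : Fin n => τ u ∈ Y)).card : ℝ)) →
      (((univ : Finset (Fin n)).filter (fun u => τ u ∉ X ∩ Y)).card : ℝ) ≤ 12*ε*n := by
    intro τ X Y hX hY
    have hinter : (univ : Finset (Fin n)).filter (fun u => τ u ∈ X ∩ Y)
        = ((univ : Finset (Fin n)).filter (fun u => τ u ∈ X))
          ∩ ((univ : Finset (Fin n)).filter (fun u => τ u ∈ Y)) := by
      ext u
      simp only [Finset.mem_filter, Finset.mem_inter, Finset.mem_univ, true_and]
    have hcup := Finset.card_inter_add_card_union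
      ((univ : Finset (Fin n)).filter (fun u => τ u ∈ X))
      ((univ : Finset (Fin n)).filter (fun u => τ u ∈ Y))
    have hU : (((univ : Finset (Fin n)).filter (fun u => τ u ∈ X))
        ∪ ((univ : Finset (Fin n)).filter (fun u => τ u ∈ Y))).card ≤ n := by
      calc _ ≤ (univ : Finset (Fin n)).card := Finset.card_le_card (Finset.subset_univ _)
      _ = n := by simp
    have hnot := Finset.card_filter_add_card_filter_not
      (s := (univ : Finset (Fin n))) (fun u => τ u ∈ X ∩ Y)
    simp only [Finset.card_univ, Fintype.card_fin] at hnot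
    rw [hinter] at hnot
    have hUU : ((((univ : Finset (Fin n)).filter (fun u => τ u ∈ X))
        ∪ ((univ : Finset (Fin n)).filter (fun u => τ u ∈ Y))).card : ℝ) ≤ n := by
      exact_mod_cast hU
    have hcupR : ((((univ : Finset (Fin n)).filter (fun u => τ u ∈ X))
        ∩ ((univ : Finset (Fin n)).filter (fun u => τ u ∈ Y))).card : ℝ)
        + ((((univ : Finset (Fin n)).filter (fun u => τ u ∈ X))
        ∪ ((univ : Finset (Fin n)).filter (fun u => τ u ∈ Y))).card : ℝ)
        = (((univ : Finset (Fin n)).filter (fun u => τ u ∈ X)).card : ℝ)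
          + (((univ : Finset (Fin n)).filter (fun u => τ u ∈ Y)).card : ℝ) := by
      exact_mod_cast hcup
    have hnotR : ((((univ : Finset (Fin n)).filter (fun u => τ u ∈ X))
        ∩ ((univ : Finset (Fin n)).filter (fun u => τ u ∈ Y))).card : ℝ)
        + (((univ : Finset (Fin n)).filter (fun u => τ u ∉ X ∩ Y)).card : ℝ) = n := by
      exact_mod_cast hnot
    linarith
  constructor
  · apply key (fun u => σ (Sum.inl u)) B0 C0
    · have hb : ((univ.filter (fun u : Fin n => σ (Sum.inr u) ∈ B1)).card : ℝ) ≤ n := by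
        calc ((univ.filter (fun u : Fin n => σ (Sum.inr u) ∈ B1)).card : ℝ)
            ≤ ((univ : Finset (Fin n)).card : ℝ) := by
              exact_mod_cast Finset.card_le_card (Finset.filter_subset _ _)
        _ = n := by simp
      nlinarith [h1]
    · have hb : ((univ.filter (fun u : Fin n => σ (Sum.inr u) ∈ C1)).card : ℝ) ≤ n := by
        calc ((univ.filter (fun u : Fin n => σ (Sum.inr u) ∈ C1)).card : ℝ)
            ≤ ((univ : Finset (Fin n)).card : ℝ) := by
              exact_mod_cast Finset.card_le_card (Finset.filter_subset _ _)
        _ = n := by simp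
      nlinarith [h2]
  · apply key (fun u => σ (Sum.inr u)) B1 C1
    · have hb : ((univ.filter (fun u : Fin n => σ (Sum.inl u) ∈ B0)).card : ℝ) ≤ n := by
        calc ((univ.filter (fun u : Fin n => σ (Sum.inl u) ∈ B0)).card : ℝ)
            ≤ ((univ : Finset (Fin n)).card : ℝ) := by
              exact_mod_cast Finset.card_le_card (Finset.filter_subset _ _)
        _ = n := by simp
      nlinarith [h1]
    · have hb : ((univ.filter (fun u : Fin n => σ (Sum.inl u) ∈ C0)).card : ℝ) ≤ n := by
        calc ((univ.filter (fun u : Fin n => σ (Sum.inl u) ∈ C0)).card : ℝ)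
            ≤ ((univ : Finset (Fin n)).card : ℝ) := by
              exact_mod_cast Finset.card_le_card (Finset.filter_subset _ _)
        _ = n := by simp
      nlinarith [h2]

/-- For sufficiently large `n`, the overlap partition function is exponentially small
compared with `Z_{G,H,ε}`. -/
theorem stmt19 (q Δ : ℕ) (lam δ ε : ℝ) (hq : 2 ≤ q) (hΔ : 3 ≤ Δ)
    (hlam0 : 0 < lam) (hlamΔ : lam < Δ) (hδ0 : 0 < δ) (hδ1 : δ < 1)
    (hε0 : 0 < ε) (hεup : ε ≤ 1 / (240 * q * Real.log q))
    (hε3 : 8 * q ^ 2 * Real.log q / ((Δ : ℝ) * Real.log (1 / δ)) ≤ ε ^ 2)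
    (hεlam : 2 * q * lam / Δ ≤ ε)
    (H : Matrix (Fin q) (Fin q) ℝ) (hsymm : H.IsSymm) (hH : IsDeltaMatrix δ H) :
    ∃ N : ℕ, ∀ n : ℕ, N ≤ n →
      ∀ (G : SimpleGraph (Fin n ⊕ Fin n)) (_ : DecidableRel G.Adj),
        G.Connected →
        (∀ a b : Fin n, ¬ G.Adj (Sum.inl a) (Sum.inl b) ∧ ¬ G.Adj (Sum.inr a) (Sum.inr b)) →
        (∀ v, G.degree v = Δ) →
        (∀ μ ∈ spectrum ℝ (G.adjMatrix ℝ), μ ≠ (Δ : ℝ) → μ ≠ -(Δ : ℝ) → |μ| ≤ lam) →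
        (∑ σ : Fin n ⊕ Fin n → Fin q,
            if ∃ B0 B1 C0 C1, IsMaxBiclique H B0 B1 ∧ IsMaxBiclique H C0 C1 ∧
                (B0, B1) ≠ (C0, C1) ∧
                NearBiclique (3 * ε) B0 B1 σ ∧ NearBiclique (3 * ε) C0 C1 σ
            then bipWeight G H σ else 0) ≤
          Real.exp (-(n : ℝ) / (3 * q)) *
            ∑ σ : Fin n ⊕ Fin n → Fin q,
              if ∃ B0 B1, IsMaxBiclique H B0 B1 ∧ NearBiclique ε B0 B1 σ
              then bipWeight G H σ else 0 := by
  classical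
  have hQ2 : (2:ℝ) ≤ (q:ℝ) := by exact_mod_cast hq
  have hQ0 : (0:ℝ) < (q:ℝ) := by linarith
  have hl2 : (0.6931471803:ℝ) < Real.log 2 := Real.log_two_gt_d9
  have ht2 : Real.log 2 ≤ Real.log q := Real.log_le_log (by norm_num) (by exact_mod_cast hQ2)
  have hlogq0 : 0 < Real.log (q:ℝ) := by linarith
  have hε24 : 24 * ε ≤ 1 := by
    have h240 : (24:ℝ) ≤ 240 * q * Real.log q := by nlinarith
    have h1 : (1:ℝ) / (240*(q:ℝ)*Real.log q) ≤ 1/24 :=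
      one_div_le_one_div_of_le (by norm_num) h240
    linarith [hεup]
  have hε12 : 12 * ε ≤ 1 := by linarith
  have hx : (0:ℝ) < 1 - 1/(q:ℝ) := by
    have : 1/(q:ℝ) ≤ 1/2 := by rw [div_le_div_iff₀ hQ0 (by norm_num)]; linarith
    linarith
  have hkey := key_analytic hq hε0 hεup
  set c : ℝ := (-Real.log (1 - 1/(q:ℝ)))
      - (24*ε*(1 - Real.log (12*ε)) + 24*ε*Real.log q + 12*ε*Real.log 2 + 1/(3*(q:ℝ)))
      with hc
  have hcpos : 0 < c := by rw [hc]; linarith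
  set T := (Finset (Fin q) × Finset (Fin q)) × (Finset (Fin q) × Finset (Fin q)) with hT
  set M : ℕ := Fintype.card T with hM
  have hM1 : 1 ≤ M := Fintype.card_pos
  have hMR : (1:ℝ) ≤ (M:ℝ) := by exact_mod_cast hM1
  have hM0 : (0:ℝ) < (M:ℝ) := by linarith
  refine ⟨max 1 (⌈Real.log M / c⌉₊ + 1), ?_⟩
  intro n hn G hdec hconn hbip hdeg hspec
  have hn1 : 1 ≤ n := le_trans (le_max_left _ _) hn
  have hnR : (1:ℝ) ≤ (n:ℝ) := by exact_mod_cast hn1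
  have hnc : Real.log M ≤ (n:ℝ) * c := by
    have h1 : Real.log M / c ≤ (⌈Real.log M / c⌉₊ : ℝ) := Nat.le_ceil _
    have h2 : ((⌈Real.log M / c⌉₊ + 1 : ℕ) : ℝ) ≤ (n:ℝ) := by
      exact_mod_cast le_trans (le_max_right 1 _) hn
    rw [div_le_iff₀ hcpos] at h1
    push_cast at h2
    have h3 : (⌈Real.log M / c⌉₊ : ℝ) * c ≤ (n:ℝ) * c :=
      mul_le_mul_of_nonneg_right (by linarith) hcpos.le
    exact le_trans h1 h3
  set k : ℕ := ⌊12*ε*(n:ℝ)⌋₊ with hk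
  have hkR : (k:ℝ) ≤ 12*ε*(n:ℝ) := Nat.floor_le (by positivity)
  have hkhalf : (k:ℝ) ≤ (n:ℝ)/2 := by nlinarith
  have hkn : k ≤ n := by
    have : (k:ℝ) ≤ (n:ℝ) := by linarith
    exact_mod_cast this
  -- the main objects
  set ZZ := ∑ σ : Fin n ⊕ Fin n → Fin q,
      if ∃ B0 B1, IsMaxBiclique H B0 B1 ∧ NearBiclique ε B0 B1 σ
      then bipWeight G H σ else 0 with hZZ
  have hZnn : 0 ≤ ZZ := by
    rw [hZZ]
    apply Finset.sum_nonneg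
    intro σ _
    split
    · exact bipWeight_nonneg G H hH σ
    · exact le_refl 0
  set β : ℝ := (n.choose k : ℝ) * (n.choose k : ℝ)
      * ((q:ℝ)^k * (q:ℝ)^k * ((2:ℝ)^k * (1 - 1/(q:ℝ))^n)) with hβ
  have hβnn : 0 ≤ β := by
    rw [hβ]
    have h1 : (0:ℝ) ≤ (1 - 1/(q:ℝ))^n := pow_nonneg hx.le n
    positivity
  -- union bound
  have step1 : (∑ σ : Fin n ⊕ Fin n → Fin q,
      if ∃ B0 B1 C0 C1, IsMaxBiclique H B0 B1 ∧ IsMaxBiclique H C0 C1 ∧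
          (B0, B1) ≠ (C0, C1) ∧
          NearBiclique (3 * ε) B0 B1 σ ∧ NearBiclique (3 * ε) C0 C1 σ
      then bipWeight G H σ else 0)
      ≤ ∑ p : T, ∑ σ : Fin n ⊕ Fin n → Fin q,
          if IsMaxBiclique H p.1.1 p.1.2 ∧ IsMaxBiclique H p.2.1 p.2.2 ∧ p.1 ≠ p.2 ∧
              NearBiclique (3 * ε) p.1.1 p.1.2 σ ∧ NearBiclique (3 * ε) p.2.1 p.2.2 σ
          then bipWeight G H σ else 0 := by
    rw [Finset.sum_comm]
    apply Finset.sum_le_sum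
    intro σ _
    by_cases hex : ∃ B0 B1 C0 C1, IsMaxBiclique H B0 B1 ∧ IsMaxBiclique H C0 C1 ∧
        (B0, B1) ≠ (C0, C1) ∧
        NearBiclique (3 * ε) B0 B1 σ ∧ NearBiclique (3 * ε) C0 C1 σ
    · obtain ⟨B0, B1, C0, C1, hB, hC, hne, h4, h5⟩ := hex
      rw [if_pos ⟨B0, B1, C0, C1, hB, hC, hne, h4, h5⟩]
      have hsingle := Finset.single_le_sum (f := fun p : T =>
          if IsMaxBiclique H p.1.1 p.1.2 ∧ IsMaxBiclique H p.2.1 p.2.2 ∧ p.1 ≠ p.2 ∧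
              NearBiclique (3 * ε) p.1.1 p.1.2 σ ∧ NearBiclique (3 * ε) p.2.1 p.2.2 σ
          then bipWeight G H σ else 0)
        (fun p _ => by
          split
          · exact bipWeight_nonneg G H hH σ
          · exact le_refl 0)
        (Finset.mem_univ (((B0, B1), (C0, C1)) : T))
      refine le_trans ?_ hsingle
      have hcondp : IsMaxBiclique H B0 B1 ∧ IsMaxBiclique H C0 C1 ∧
          ((B0, B1) : Finset (Fin q) × Finset (Fin q)) ≠ (C0, C1) ∧
          NearBiclique (3 * ε) B0 B1 σ ∧ NearBiclique (3 * ε) C0 C1 σ := ⟨hB, hC, hne, h4, h5⟩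
      show bipWeight G H σ ≤ if IsMaxBiclique H B0 B1 ∧ IsMaxBiclique H C0 C1 ∧
          ((B0, B1) : Finset (Fin q) × Finset (Fin q)) ≠ (C0, C1) ∧
          NearBiclique (3 * ε) B0 B1 σ ∧ NearBiclique (3 * ε) C0 C1 σ
        then bipWeight G H σ else 0
      rw [if_pos hcondp]
    · rw [if_neg hex]
      apply Finset.sum_nonneg
      intro p _
      split
      · exact bipWeight_nonneg G H hH σ
      · exact le_refl 0
  -- per-tuple bound
  have step2 : ∀ p : T, (∑ σ : Fin n ⊕ Fin n → Fin q,
      if IsMaxBiclique H p.1.1 p.1.2 ∧ IsMaxBiclique H p.2.1 p.2.2 ∧ p.1 ≠ p.2 ∧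
          NearBiclique (3 * ε) p.1.1 p.1.2 σ ∧ NearBiclique (3 * ε) p.2.1 p.2.2 σ
      then bipWeight G H σ else 0) ≤ β * ZZ := by
    rintro ⟨⟨B0, B1⟩, ⟨C0, C1⟩⟩
    simp only
    by_cases hex : ∃ σ0 : Fin n ⊕ Fin n → Fin q, IsMaxBiclique H B0 B1 ∧
        IsMaxBiclique H C0 C1 ∧ ((B0, B1) : Finset (Fin q) × Finset (Fin q)) ≠ (C0, C1) ∧
        NearBiclique (3 * ε) B0 B1 σ0 ∧ NearBiclique (3 * ε) C0 C1 σ0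
    swap
    · rw [Finset.sum_eq_zero (fun σ _ => if_neg (fun h => hex ⟨σ, h⟩))]
      exact mul_nonneg hβnn hZnn
    obtain ⟨σ0, hB, hC, hne, hnB0, hnC0⟩ := hex
    -- bad coordinates are at most k
    have hbadk : ∀ σ : Fin n ⊕ Fin n → Fin q,
        NearBiclique (3 * ε) B0 B1 σ → NearBiclique (3 * ε) C0 C1 σ →
        ((univ : Finset (Fin n)).filter (fun u => σ (Sum.inl u) ∉ B0 ∩ C0)).card ≤ k ∧
        ((univ : Finset (Fin n)).filter (fun u => σ (Sum.inr u) ∉ B1 ∩ C1)).card ≤ k := by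
      intro σ hσ1 hσ2
      obtain ⟨hb1, hb2⟩ := near_bad hσ1 hσ2
      exact ⟨Nat.le_floor hb1, Nat.le_floor hb2⟩
    -- sum is at most cardinality of bad-configuration set
    have hterm : (∑ σ : Fin n ⊕ Fin n → Fin q,
        if IsMaxBiclique H B0 B1 ∧ IsMaxBiclique H C0 C1 ∧
            ((B0, B1) : Finset (Fin q) × Finset (Fin q)) ≠ (C0, C1) ∧
            NearBiclique (3 * ε) B0 B1 σ ∧ NearBiclique (3 * ε) C0 C1 σ
        then bipWeight G H σ else 0)
        ≤ (((univ : Finset ((Fin n ⊕ Fin n) → Fin q)).filter (fun σ =>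
            (univ.filter (fun u : Fin n => σ (Sum.inl u) ∉ B0 ∩ C0)).card ≤ k ∧
            (univ.filter (fun u : Fin n => σ (Sum.inr u) ∉ B1 ∩ C1)).card ≤ k)).card : ℝ) := by
      rw [← Finset.sum_boole]
      apply Finset.sum_le_sum
      intro σ _
      by_cases hcond : IsMaxBiclique H B0 B1 ∧ IsMaxBiclique H C0 C1 ∧
          ((B0, B1) : Finset (Fin q) × Finset (Fin q)) ≠ (C0, C1) ∧
          NearBiclique (3 * ε) B0 B1 σ ∧ NearBiclique (3 * ε) C0 C1 σ
      · rw [if_pos hcond, if_pos (hbadk σ hcond.2.2.2.1 hcond.2.2.2.2)]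
        exact bipWeight_le_one G hδ1.le H hH σ
      · rw [if_neg hcond]
        split
        · norm_num
        · exact le_refl 0
    -- nonemptiness of the intersections
    have hnonempty : ∀ (τ : Fin n → Fin q) (D : Finset (Fin q)),
        ((univ : Finset (Fin n)).filter (fun u => τ u ∉ D)).card ≤ k → D.Nonempty := by
      intro τ D hbad
      have hnot := Finset.card_filter_add_card_filter_not
        (s := (univ : Finset (Fin n))) (fun u => τ u ∈ D)
      simp only [Finset.card_univ, Fintype.card_fin] at hnot
      have hbadR : (((univ : Finset (Fin n)).filter (fun u => ¬ τ u ∈ D)).card : ℝ) ≤ (n:ℝ)/2 := by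
        calc (((univ : Finset (Fin n)).filter (fun u => ¬ τ u ∈ D)).card : ℝ)
            ≤ (k:ℝ) := by exact_mod_cast hbad
        _ ≤ (n:ℝ)/2 := hkhalf
      have heq : (((univ : Finset (Fin n)).filter (fun u => τ u ∈ D)).card : ℝ)
          + (((univ : Finset (Fin n)).filter (fun u => ¬ τ u ∈ D)).card : ℝ) = (n:ℝ) := by
        exact_mod_cast hnot
      have hposR : (0:ℝ) < (((univ : Finset (Fin n)).filter (fun u => τ u ∈ D)).card : ℝ) := by
        linarith
      have hpos : 0 < ((univ : Finset (Fin n)).filter (fun u => τ u ∈ D)).card := by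
        exact_mod_cast hposR
      obtain ⟨u, hu⟩ := Finset.card_pos.1 hpos
      exact ⟨τ u, (Finset.mem_filter.1 hu).2⟩
    have hD0ne : (B0 ∩ C0).Nonempty := hnonempty _ _ (hbadk σ0 hnB0 hnC0).1
    have hD1ne : (B1 ∩ C1).Nonempty := hnonempty _ _ (hbadk σ0 hnB0 hnC0).2
    have hd0one : 1 ≤ (B0 ∩ C0).card := Finset.card_pos.2 hD0ne
    have hd1one : 1 ≤ (B1 ∩ C1).card := Finset.card_pos.2 hD1ne
    -- strictness
    have hnsub : ¬ (B0 ⊆ C0) ∨ ¬ (B1 ⊆ C1) := by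
      by_contra hcon
      push_neg at hcon
      obtain ⟨hs0, hs1⟩ := hcon
      obtain ⟨he0, he1⟩ := hB.2 C0 C1 hC.1 hs0 hs1
      exact hne (by rw [he0, he1])
    -- power chain
    have hchain : ((B0 ∩ C0).card : ℝ)^(n-k) * ((B1 ∩ C1).card : ℝ)^(n-k)
        ≤ (2:ℝ)^k * (1 - 1/(q:ℝ))^n * ((B0.card : ℝ)^n * (B1.card : ℝ)^n) := by
      have hsub0 : (B0 ∩ C0).card ≤ B0.card := Finset.card_le_card Finset.inter_subset_left
      have hsub1 : (B1 ∩ C1).card ≤ B1.card := Finset.card_le_card Finset.inter_subset_left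
      have hq0' : ∀ D : Finset (Fin q), (D.card : ℝ) ≤ (q:ℝ) := by
        intro D
        have := Finset.card_le_univ D
        simp only [Finset.card_univ, Fintype.card_fin] at this
        exact_mod_cast this
      rcases hnsub with hs | hs
      · have hssub : B0 ∩ C0 ⊂ B0 := by
          refine ⟨Finset.inter_subset_left, fun hsup => hs ?_⟩
          intro x hx
          exact Finset.mem_of_mem_inter_right (hsup hx)
        have hlt : (B0 ∩ C0).card < B0.card := Finset.card_lt_card hssub
        have hd0 : ((B0 ∩ C0).card : ℝ) ≤ (B0.card : ℝ) - 1 := by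
          have : (B0 ∩ C0).card + 1 ≤ B0.card := hlt
          have := (Nat.cast_le (α := ℝ)).2 this
          push_cast at this
          linarith
        exact pow_chain (d0 := ((B0 ∩ C0).card : ℝ)) (d1 := ((B1 ∩ C1).card : ℝ))
          (b0 := (B0.card : ℝ)) (b1 := (B1.card : ℝ)) hq hkn
          (by exact_mod_cast hd0one) (by exact_mod_cast hd1one)
          hd0 (by exact_mod_cast hsub1) (hq0' B0)
      · have hssub : B1 ∩ C1 ⊂ B1 := by
          refine ⟨Finset.inter_subset_left, fun hsup => hs ?_⟩
          intro x hx
          exact Finset.mem_of_mem_inter_right (hsup hx)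
        have hlt : (B1 ∩ C1).card < B1.card := Finset.card_lt_card hssub
        have hd1 : ((B1 ∩ C1).card : ℝ) ≤ (B1.card : ℝ) - 1 := by
          have : (B1 ∩ C1).card + 1 ≤ B1.card := hlt
          have := (Nat.cast_le (α := ℝ)).2 this
          push_cast at this
          linarith
        have := pow_chain (d0 := ((B1 ∩ C1).card : ℝ)) (d1 := ((B0 ∩ C0).card : ℝ))
          (b0 := (B1.card : ℝ)) (b1 := (B0.card : ℝ)) hq hkn
          (by exact_mod_cast hd1one) (by exact_mod_cast hd0one)
          hd1 (by exact_mod_cast hsub0) (hq0' B1)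
        calc ((B0 ∩ C0).card : ℝ)^(n-k) * ((B1 ∩ C1).card : ℝ)^(n-k)
            = ((B1 ∩ C1).card : ℝ)^(n-k) * ((B0 ∩ C0).card : ℝ)^(n-k) := by ring
        _ ≤ (2:ℝ)^k * (1 - 1/(q:ℝ))^n * ((B1.card : ℝ)^n * (B0.card : ℝ)^n) := this
        _ = (2:ℝ)^k * (1 - 1/(q:ℝ))^n * ((B0.card : ℝ)^n * (B1.card : ℝ)^n) := by ring
    -- counting
    have hcount := count_bad n q k hkn (B0 ∩ C0) (B1 ∩ C1)
    have hcountR : (((univ : Finset ((Fin n ⊕ Fin n) → Fin q)).filter (fun σ =>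
        (univ.filter (fun u : Fin n => σ (Sum.inl u) ∉ B0 ∩ C0)).card ≤ k ∧
        (univ.filter (fun u : Fin n => σ (Sum.inr u) ∉ B1 ∩ C1)).card ≤ k)).card : ℝ)
        ≤ (n.choose k : ℝ) * (n.choose k : ℝ) * ((q:ℝ)^k * (q:ℝ)^k
          * (((B0 ∩ C0).card : ℝ)^(n-k) * ((B1 ∩ C1).card : ℝ)^(n-k))) := by
      exact_mod_cast hcount
    -- Z lower bound
    have hZlow : (B0.card : ℝ)^n * (B1.card : ℝ)^n ≤ ZZ := by
      rw [hZZ]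
      exact Z_lower G hε0 H hH B0 B1 hB
    have hnn2 : (0:ℝ) ≤ (n.choose k : ℝ) * (n.choose k : ℝ) * ((q:ℝ)^k * (q:ℝ)^k) := by
      positivity
    calc (∑ σ : Fin n ⊕ Fin n → Fin q,
        if IsMaxBiclique H B0 B1 ∧ IsMaxBiclique H C0 C1 ∧
            ((B0, B1) : Finset (Fin q) × Finset (Fin q)) ≠ (C0, C1) ∧
            NearBiclique (3 * ε) B0 B1 σ ∧ NearBiclique (3 * ε) C0 C1 σ
        then bipWeight G H σ else 0)
        ≤ (((univ : Finset ((Fin n ⊕ Fin n) → Fin q)).filter (fun σ =>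
            (univ.filter (fun u : Fin n => σ (Sum.inl u) ∉ B0 ∩ C0)).card ≤ k ∧
            (univ.filter (fun u : Fin n => σ (Sum.inr u) ∉ B1 ∩ C1)).card ≤ k)).card : ℝ) := hterm
    _ ≤ (n.choose k : ℝ) * (n.choose k : ℝ) * ((q:ℝ)^k * (q:ℝ)^k
          * (((B0 ∩ C0).card : ℝ)^(n-k) * ((B1 ∩ C1).card : ℝ)^(n-k))) := hcountR
    _ = ((n.choose k : ℝ) * (n.choose k : ℝ) * ((q:ℝ)^k * (q:ℝ)^k))
          * (((B0 ∩ C0).card : ℝ)^(n-k) * ((B1 ∩ C1).card : ℝ)^(n-k)) := by ring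
    _ ≤ ((n.choose k : ℝ) * (n.choose k : ℝ) * ((q:ℝ)^k * (q:ℝ)^k))
          * ((2:ℝ)^k * (1 - 1/(q:ℝ))^n * ((B0.card : ℝ)^n * (B1.card : ℝ)^n)) :=
        mul_le_mul_of_nonneg_left hchain hnn2
    _ = β * ((B0.card : ℝ)^n * (B1.card : ℝ)^n) := by rw [hβ]; ring
    _ ≤ β * ZZ := mul_le_mul_of_nonneg_left hZlow hβnn
  -- sum over all tuples
  have step3 : (∑ p : T, ∑ σ : Fin n ⊕ Fin n → Fin q,
      if IsMaxBiclique H p.1.1 p.1.2 ∧ IsMaxBiclique H p.2.1 p.2.2 ∧ p.1 ≠ p.2 ∧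
          NearBiclique (3 * ε) p.1.1 p.1.2 σ ∧ NearBiclique (3 * ε) p.2.1 p.2.2 σ
      then bipWeight G H σ else 0) ≤ (M:ℝ) * (β * ZZ) := by
    calc (∑ p : T, ∑ σ : Fin n ⊕ Fin n → Fin q,
        if IsMaxBiclique H p.1.1 p.1.2 ∧ IsMaxBiclique H p.2.1 p.2.2 ∧ p.1 ≠ p.2 ∧
            NearBiclique (3 * ε) p.1.1 p.1.2 σ ∧ NearBiclique (3 * ε) p.2.1 p.2.2 σ
        then bipWeight G H σ else 0)
        ≤ ∑ _p : T, β * ZZ := Finset.sum_le_sum (fun p _ => step2 p)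
    _ = (M:ℝ) * (β * ZZ) := by
        rw [Finset.sum_const, Finset.card_univ, nsmul_eq_mul]
  -- exponential bound
  have hβexp : (M:ℝ) * β ≤ Real.exp (-(n:ℝ)/(3*(q:ℝ))) := by
    have hch : (n.choose k : ℝ) ≤ Real.exp ((n:ℝ) * ((12*ε) * (1 - Real.log (12*ε)))) :=
      choose_le_exp hn1 (by positivity) hε12 (by linarith [hkR])
    have hqk : (q:ℝ)^k ≤ Real.exp (12*ε*(n:ℝ) * Real.log q) := by
      have h1 : (q:ℝ)^k = Real.exp ((k:ℝ) * Real.log q) := by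
        rw [Real.exp_nat_mul, Real.exp_log hQ0]
      rw [h1]
      apply Real.exp_le_exp.2
      exact mul_le_mul_of_nonneg_right hkR hlogq0.le
    have h2k : (2:ℝ)^k ≤ Real.exp (12*ε*(n:ℝ) * Real.log 2) := by
      have h1 : (2:ℝ)^k = Real.exp ((k:ℝ) * Real.log 2) := by
        rw [Real.exp_nat_mul, Real.exp_log (by norm_num)]
      rw [h1]
      apply Real.exp_le_exp.2
      exact mul_le_mul_of_nonneg_right hkR (by linarith)
    have hrn : (1 - 1/(q:ℝ))^n = Real.exp ((n:ℝ) * Real.log (1 - 1/(q:ℝ))) := by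
      rw [Real.exp_nat_mul, Real.exp_log hx]
    have hMe : (M:ℝ) ≤ Real.exp (Real.log M) := le_of_eq (Real.exp_log hM0).symm
    calc (M:ℝ) * β
        = (M:ℝ) * ((n.choose k : ℝ) * (n.choose k : ℝ)
          * ((q:ℝ)^k * (q:ℝ)^k * ((2:ℝ)^k
            * Real.exp ((n:ℝ) * Real.log (1 - 1/(q:ℝ)))))) := by rw [hβ, hrn]
    _ ≤ Real.exp (Real.log M) * (Real.exp ((n:ℝ) * ((12*ε) * (1 - Real.log (12*ε))))
          * Real.exp ((n:ℝ) * ((12*ε) * (1 - Real.log (12*ε))))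
          * (Real.exp (12*ε*(n:ℝ) * Real.log q) * Real.exp (12*ε*(n:ℝ) * Real.log q)
            * (Real.exp (12*ε*(n:ℝ) * Real.log 2)
              * Real.exp ((n:ℝ) * Real.log (1 - 1/(q:ℝ)))))) := by
        gcongr <;>
          first
            | positivity
            | exact hMe
            | exact hch
            | exact hqk
            | exact h2k
    _ = Real.exp (Real.log M + ((n:ℝ) * ((12*ε) * (1 - Real.log (12*ε)))
          + (n:ℝ) * ((12*ε) * (1 - Real.log (12*ε)))
          + (12*ε*(n:ℝ) * Real.log q + 12*ε*(n:ℝ) * Real.log q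
            + (12*ε*(n:ℝ) * Real.log 2 + (n:ℝ) * Real.log (1 - 1/(q:ℝ)))))) := by
        simp only [← Real.exp_add]
    _ ≤ Real.exp (-(n:ℝ)/(3*(q:ℝ))) := by
        apply Real.exp_le_exp.2
        have hclin : Real.log M ≤ (n:ℝ) * c := hnc
        rw [hc] at hclin
        ring_nf at hclin ⊢
        linarith [hclin]
  -- conclusion
  calc (∑ σ : Fin n ⊕ Fin n → Fin q,
      if ∃ B0 B1 C0 C1, IsMaxBiclique H B0 B1 ∧ IsMaxBiclique H C0 C1 ∧
          (B0, B1) ≠ (C0, C1) ∧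
          NearBiclique (3 * ε) B0 B1 σ ∧ NearBiclique (3 * ε) C0 C1 σ
      then bipWeight G H σ else 0)
      ≤ ∑ p : T, ∑ σ : Fin n ⊕ Fin n → Fin q,
          if IsMaxBiclique H p.1.1 p.1.2 ∧ IsMaxBiclique H p.2.1 p.2.2 ∧ p.1 ≠ p.2 ∧
              NearBiclique (3 * ε) p.1.1 p.1.2 σ ∧ NearBiclique (3 * ε) p.2.1 p.2.2 σ
          then bipWeight G H σ else 0 := step1
  _ ≤ (M:ℝ) * (β * ZZ) := step3
  _ = ((M:ℝ) * β) * ZZ := by ring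
  _ ≤ Real.exp (-(n:ℝ)/(3*(q:ℝ))) * ZZ :=
      mul_le_mul_of_nonneg_right hβexp hZnn
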